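/- Let a < b and consider two 4-PI operators Π[A,B₁,B₂,C₀,C₁,C₂] : ℝ^k × L²([a,b],ℝ^n) → ℝ^p × L²([a,b],ℝ^q) and Π[P,Q₁,Q₂,R₀,R₁,R₂] : ℝ^m × L²([a,b],ℝ^r) → ℝ^k × L²([a,b],ℝ^n) with continuous matrix-valued parameters. Then their composition equals the 4-PI operator Π[P̂,Q̂₁,Q̂₂,R̂₀,R̂₁,R̂₂] where: P̂ = AP + ∫_a^b B₁(s)Q₂(s)ds; Q̂₁(s) = AQ₁(s) + B₁(s)R₀(s) + ∫_s^b B₁(η)R₁(η,s)dη + ∫_a^s B₁(η)R₂(η,s)dη; Q̂₂(s) = B₂(s)P + C₀(s)Q₂(s) + ∫_a^s C₁(s,η)Q₂(η)dη + ∫_s^b C₂(s,η)Q₂(η)dη; R̂₀(s) = C₀(s)R₀(s); R̂₁(s,η) = B₂(s)Q₁(η) + C₀(s)R₁(s,η) + C₁(s,η)R₀(η) + ∫_a^η C₁(s,θ)R₂(θ,η)dθ + ∫_η^s C₁(s,θ)R₁(θ,η)dθ + ∫_s^b C₂(s,θ)R₁(θ,η)dθ; R̂₂(s,η) = B₂(s)Q₁(η)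 + C₀(s)R₂(s,η) + C₂(s,η)R₀(η) + ∫_a^s C₁(s,θ)R₂(θ,η)dθ + ∫_s^η C₂(s,θ)R₂(θ,η)dθ + ∫_η^b C₂(s,θ)R₁(θ,η)dθ. In particular, the composition of two 4-PI operators is a 4-PI operator. -/

import Mathlib

open MeasureTheory Set

noncomputable local instance {k l : ℕ} : NormedAddCommGroup (Matrix (Fin k) (Fin l) ℝ) :=
  Matrix.normedAddCommGroup

noncomputable local instance {k l : ℕ} : NormedSpace ℝ (Matrix (Fin k) (Fin l) ℝ) :=
  Matrix.normedSpace

/-- Matrix–vector multiplication, viewed as a map between Euclidean spaces. -/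
def mulVecE {n m : ℕ} (M : Matrix (Fin n) (Fin m) ℝ) (v : EuclideanSpace ℝ (Fin m)) :
    EuclideanSpace ℝ (Fin n) := WithLp.toLp 2 (M.mulVec v)

/-- The 3-PI operator `P_{N₀,N₁,N₂}`, applied pointwise. -/
noncomputable def threePI {n m : ℕ} (a b : ℝ)
    (N₀ : ℝ → Matrix (Fin n) (Fin m) ℝ)
    (N₁ N₂ : ℝ → ℝ → Matrix (Fin n) (Fin m) ℝ)
    (y : ℝ → EuclideanSpace ℝ (Fin m)) (s : ℝ) : EuclideanSpace ℝ (Fin n) :=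
  mulVecE (N₀ s) (y s) + (∫ θ in a..s, mulVecE (N₁ s θ) (y θ))
    + ∫ θ in s..b, mulVecE (N₂ s θ) (y θ)

/-- Finite-dimensional component of the 4-PI operator `Π[P,Q₁,Q₂,R₀,R₁,R₂]`:
`P x + ∫_a^b Q₁(s) y(s) ds`. -/
noncomputable def fourPIfin {p n m : ℕ} (a b : ℝ)
    (P : Matrix (Fin p) (Fin m) ℝ) (Q₁ : ℝ → Matrix (Fin p) (Fin n) ℝ)
    (x : EuclideanSpace ℝ (Fin m)) (y : ℝ → EuclideanSpace ℝ (Fin n)) :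
    EuclideanSpace ℝ (Fin p) :=
  mulVecE P x + ∫ s in a..b, mulVecE (Q₁ s) (y s)

/-- Function-valued component of the 4-PI operator `Π[P,Q₁,Q₂,R₀,R₁,R₂]`:
`s ↦ Q₂(s) x + (P_{R₀,R₁,R₂} y)(s)`. -/
noncomputable def fourPIfun {q n m : ℕ} (a b : ℝ)
    (Q₂ : ℝ → Matrix (Fin q) (Fin m) ℝ)
    (R₀ : ℝ → Matrix (Fin q) (Fin n) ℝ) (R₁ R₂ : ℝ → ℝ → Matrix (Fin q) (Fin n) ℝ)
    (x : EuclideanSpace ℝ (Fin m)) (y : ℝ → EuclideanSpace ℝ (Fin n)) (s : ℝ) :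
    EuclideanSpace ℝ (Fin q) :=
  mulVecE (Q₂ s) x + threePI a b R₀ R₁ R₂ y s

section mainsec

open scoped Interval

noncomputable local instance instMatTopNorm {k l : ℕ} : TopologicalSpace (Matrix (Fin k) (Fin l) ℝ) :=
  @UniformSpace.toTopologicalSpace _ (@PseudoMetricSpace.toUniformSpace _
    (@SeminormedAddCommGroup.toPseudoMetricSpace _
      (@NormedAddCommGroup.toSeminormedAddCommGroup _
        (inferInstance : NormedAddCommGroup (Matrix (Fin k) (Fin l) ℝ)))))

noncomputable def mulCLM (u v : ℕ) :
    Matrix (Fin u) (Fin v) ℝ →L[ℝ] (EuclideanSpace ℝ (Fin v) →L[ℝ] EuclideanSpace ℝ (Fin u)) :=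
  LinearMap.toContinuousLinearMap
  { toFun := fun M => LinearMap.toContinuousLinearMap
      { toFun := fun w => mulVecE M w
        map_add' := fun w w' => by simp [mulVecE, Matrix.mulVec_add]
        map_smul' := fun c w => by simp [mulVecE, Matrix.mulVec_smul] }
    map_add' := fun M N => by
      ext w i
      simp [mulVecE, Matrix.add_mulVec]
    map_smul' := fun c M => by
      ext w i
      simp [mulVecE, Matrix.smul_mulVec] }

lemma mulCLM_apply {u v : ℕ} (M : Matrix (Fin u) (Fin v) ℝ) (w : EuclideanSpace ℝ (Fin v)) :
    mulCLM u v M w = mulVecE M w := rfl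

noncomputable def appCLM {u v : ℕ} (w : EuclideanSpace ℝ (Fin v)) :
    Matrix (Fin u) (Fin v) ℝ →L[ℝ] EuclideanSpace ℝ (Fin u) :=
  LinearMap.toContinuousLinearMap
  { toFun := fun M => mulVecE M w
    map_add' := fun M N => by simp [mulVecE, Matrix.add_mulVec]
    map_smul' := fun c M => by simp [mulVecE, Matrix.smul_mulVec] }

lemma appCLM_apply {u v : ℕ} (M : Matrix (Fin u) (Fin v) ℝ) (w : EuclideanSpace ℝ (Fin v)) :
    appCLM w M = mulVecE M w := rfl

lemma norm_mulVecE_le {u v : ℕ} (M : Matrix (Fin u) (Fin v) ℝ) (w : EuclideanSpace ℝ (Fin v)) :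
    ‖mulVecE M w‖ ≤ ‖mulCLM u v‖ * ‖M‖ * ‖w‖ := by
  calc ‖mulVecE M w‖ = ‖mulCLM u v M w‖ := rfl
    _ ≤ ‖mulCLM u v M‖ * ‖w‖ := (mulCLM u v M).le_opNorm w
    _ ≤ ‖mulCLM u v‖ * ‖M‖ * ‖w‖ :=
        mul_le_mul_of_nonneg_right ((mulCLM u v).le_opNorm M) (norm_nonneg w)

lemma mulVecE_add {u v : ℕ} (M : Matrix (Fin u) (Fin v) ℝ) (w w' : EuclideanSpace ℝ (Fin v)) :
    mulVecE M (w + w') = mulVecE M w + mulVecE M w' := by simp [mulVecE, Matrix.mulVec_add]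

lemma add_mulVecE {u v : ℕ} (M N : Matrix (Fin u) (Fin v) ℝ) (w : EuclideanSpace ℝ (Fin v)) :
    mulVecE (M + N) w = mulVecE M w + mulVecE N w := by simp [mulVecE, Matrix.add_mulVec]

lemma mulVecE_mulVecE {u v t : ℕ} (M : Matrix (Fin u) (Fin v) ℝ) (N : Matrix (Fin v) (Fin t) ℝ)
    (w : EuclideanSpace ℝ (Fin t)) :
    mulVecE M (mulVecE N w) = mulVecE (M * N) w := by simp [mulVecE, Matrix.mulVec_mulVec]

section helpers

variable {a b : ℝ} {r : ℕ} {y : ℝ → EuclideanSpace ℝ (Fin r)}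

lemma finMeas : IsFiniteMeasure (volume.restrict (Icc a b)) :=
  ⟨by rw [Measure.restrict_apply_univ]; exact measure_Icc_lt_top⟩

/-- interval integrability from integrability on `Icc a b`. -/
lemma II {E : Type*} [NormedAddCommGroup E] {f : ℝ → E}
    (hf : Integrable f (volume.restrict (Icc a b))) {c d : ℝ}
    (hac : a ≤ c) (hdb : d ≤ b) (hca : a ≤ d) (hdb' : c ≤ b) :
    IntervalIntegrable f volume c d := by
  rw [intervalIntegrable_iff]
  refine IntegrableOn.mono_set hf ?_
  rcases le_total c d with h | h
  · rw [uIoc_of_le h]; exact Ioc_subset_Icc_self.trans (Icc_subset_Icc hac hdb)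
  · rw [uIoc_of_ge h]; exact Ioc_subset_Icc_self.trans (Icc_subset_Icc hca hdb')

/-- Integrable: bounded a.e.-measurable kernel times L² function. -/
lemma int_kernel_y {u : ℕ} {K : ℝ → Matrix (Fin u) (Fin r) ℝ}
    (hy : MemLp y 2 (volume.restrict (Icc a b)))
    (hKm : AEStronglyMeasurable K (volume.restrict (Icc a b)))
    {C : ℝ} (hC : ∀ s ∈ Icc a b, ‖K s‖ ≤ C) :
    Integrable (fun θ => mulVecE (K θ) (y θ)) (volume.restrict (Icc a b)) := by
  haveI := finMeas (a := a) (b := b)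
  have hyi : Integrable y (volume.restrict (Icc a b)) := hy.integrable one_le_two
  have hasm : AEStronglyMeasurable (fun θ => mulVecE (K θ) (y θ)) (volume.restrict (Icc a b)) :=
    (mulCLM u r).aestronglyMeasurable_comp₂ hKm hy.aestronglyMeasurable
  refine Integrable.mono' (hyi.norm.const_mul (‖mulCLM u r‖ * C)) hasm ?_
  refine (ae_restrict_iff' measurableSet_Icc).2 (ae_of_all _ fun θ hθ => ?_)
  calc ‖mulVecE (K θ) (y θ)‖ ≤ ‖mulCLM u r‖ * ‖K θ‖ * ‖y θ‖ := norm_mulVecE_le _ _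
    _ ≤ ‖mulCLM u r‖ * C * ‖y θ‖ := by
        exact mul_le_mul_of_nonneg_right
          (mul_le_mul_of_nonneg_left (hC θ hθ) (mulCLM u r).opNorm_nonneg) (norm_nonneg _)

lemma int_kernel_y_cont {u : ℕ} {K : ℝ → Matrix (Fin u) (Fin r) ℝ}
    (hy : MemLp y 2 (volume.restrict (Icc a b)))
    (hK : ContinuousOn K (Icc a b)) :
    Integrable (fun θ => mulVecE (K θ) (y θ)) (volume.restrict (Icc a b)) := by
  obtain ⟨C, hC⟩ := isCompact_Icc.exists_bound_of_continuousOn hK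
  exact int_kernel_y hy (hK.aestronglyMeasurable measurableSet_Icc) hC

/-- product-measure integrability of `(θ, η) ↦ K θ η ⬝ y η`. -/
lemma int_kernel_y_prod {u : ℕ} {K : ℝ → ℝ → Matrix (Fin u) (Fin r) ℝ}
    (hy : MemLp y 2 (volume.restrict (Icc a b)))
    (hK : ContinuousOn (fun z : ℝ × ℝ => K z.1 z.2) (Icc a b ×ˢ Icc a b)) :
    Integrable (fun z : ℝ × ℝ => mulVecE (K z.1 z.2) (y z.2))
      ((volume.restrict (Icc a b)).prod (volume.restrict (Icc a b))) := by
  haveI := finMeas (a := a) (b := b)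
  have hyi : Integrable y (volume.restrict (Icc a b)) := hy.integrable one_le_two
  obtain ⟨C, hC⟩ := (isCompact_Icc.prod isCompact_Icc).exists_bound_of_continuousOn hK
  have hKm : AEStronglyMeasurable (fun z : ℝ × ℝ => K z.1 z.2)
      ((volume.restrict (Icc a b)).prod (volume.restrict (Icc a b))) := by
    rw [Measure.prod_restrict]
    exact hK.aestronglyMeasurable (measurableSet_Icc.prod measurableSet_Icc)
  have hasm := (mulCLM u r).aestronglyMeasurable_comp₂ hKm hy.aestronglyMeasurable.comp_snd
  have hg : Integrable (fun z : ℝ × ℝ => (1 : ℝ) • ((‖mulCLM u r‖ * C) * ‖y z.2‖))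
      ((volume.restrict (Icc a b)).prod (volume.restrict (Icc a b))) :=
    (integrable_const (1:ℝ)).smul_prod (hyi.norm.const_mul (‖mulCLM u r‖ * C))
  refine Integrable.mono' (by simpa using hg) hasm ?_
  rw [Measure.prod_restrict]
  refine (ae_restrict_iff' (measurableSet_Icc.prod measurableSet_Icc)).2
    (ae_of_all _ fun z hz => ?_)
  calc ‖mulVecE (K z.1 z.2) (y z.2)‖ ≤ ‖mulCLM u r‖ * ‖K z.1 z.2‖ * ‖y z.2‖ := norm_mulVecE_le _ _
    _ ≤ ‖mulCLM u r‖ * C * ‖y z.2‖ := by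
        exact mul_le_mul_of_nonneg_right
          (mul_le_mul_of_nonneg_left (hC z hz) (mulCLM u r).opNorm_nonneg) (norm_nonneg _)

end helpers

section marg
variable {a b : ℝ} {r : ℕ} {y : ℝ → EuclideanSpace ℝ (Fin r)}

lemma asm_marg_base {E : Type*} [NormedAddCommGroup E] [NormedSpace ℝ E] {f : ℝ → ℝ → E}
    (hf : AEStronglyMeasurable (fun z : ℝ × ℝ => f z.1 z.2)
      ((volume.restrict (Icc a b)).prod (volume.restrict (Ioc a b))))
    {w : ℝ → ℝ} (hw : Measurable w) (hw1 : ∀ s ∈ Icc a b, w s ∈ Icc a b) :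
    AEStronglyMeasurable (fun s => ∫ t in a..(w s), f s t) (volume.restrict (Icc a b)) := by
  have hset : MeasurableSet {z : ℝ × ℝ | z.2 ≤ w z.1} :=
    measurableSet_le measurable_snd (hw.comp measurable_fst)
  have hG := (hf.indicator hset).integral_prod_right'
  refine hG.congr ?_
  refine (ae_restrict_iff' measurableSet_Icc).2 (ae_of_all _ fun s hs => ?_)
  have hws := hw1 s hs
  have h1 : (fun t => ({z : ℝ × ℝ | z.2 ≤ w z.1}.indicator (fun z => f z.1 z.2) (s, t)))
      = (Iic (w s)).indicator (f s) := by
    funext t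
    by_cases h : t ≤ w s
    · rw [Set.indicator_of_mem (by exact h) (fun z : ℝ × ℝ => f z.1 z.2),
        Set.indicator_of_mem (by exact h)]
    · rw [Set.indicator_of_notMem (by exact h) (fun z : ℝ × ℝ => f z.1 z.2),
        Set.indicator_of_notMem (by exact h)]
  calc (∫ t, {z : ℝ × ℝ | z.2 ≤ w z.1}.indicator (fun z => f z.1 z.2) (s, t)
        ∂(volume.restrict (Ioc a b)))
      = ∫ t, (Iic (w s)).indicator (f s) t ∂(volume.restrict (Ioc a b)) := by rw [h1]
    _ = ∫ t in Iic (w s), f s t ∂(volume.restrict (Ioc a b)) :=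
        integral_indicator measurableSet_Iic
    _ = ∫ t in Iic (w s) ∩ Ioc a b, f s t := by
        rw [Measure.restrict_restrict measurableSet_Iic]
    _ = ∫ t in Ioc a (w s), f s t := by
        rw [Set.inter_comm, Set.Ioc_inter_Iic, min_eq_right hws.2]
    _ = ∫ t in a..(w s), f s t := (intervalIntegral.integral_of_le hws.1).symm

lemma asm_marg {E : Type*} [NormedAddCommGroup E] [NormedSpace ℝ E] {f : ℝ → ℝ → E}
    (hf : AEStronglyMeasurable (fun z : ℝ × ℝ => f z.1 z.2)
      ((volume.restrict (Icc a b)).prod (volume.restrict (Ioc a b))))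
    (hfi : ∀ s ∈ Icc a b, ∀ c ∈ Icc a b, IntervalIntegrable (f s) volume a c)
    {u v : ℝ → ℝ} (hu : Measurable u) (hv : Measurable v)
    (hu1 : ∀ s ∈ Icc a b, u s ∈ Icc a b) (hv1 : ∀ s ∈ Icc a b, v s ∈ Icc a b) :
    AEStronglyMeasurable (fun s => ∫ t in u s..v s, f s t) (volume.restrict (Icc a b)) := by
  refine ((asm_marg_base hf hv hv1).sub (asm_marg_base hf hu hu1)).congr ?_
  refine (ae_restrict_iff' measurableSet_Icc).2 (ae_of_all _ fun s hs => ?_)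
  simp only [Pi.sub_apply]
  exact intervalIntegral.integral_interval_sub_left (hfi s hs _ (hv1 s hs)) (hfi s hs _ (hu1 s hs))
end marg

section marg2
variable {a b : ℝ} {r : ℕ} {y : ℝ → EuclideanSpace ℝ (Fin r)}

lemma uIoc_sub_Icc {u v : ℝ} (hu : u ∈ Icc a b) (hv : v ∈ Icc a b) :
    Ι u v ⊆ Icc a b :=
  Set.uIoc_subset_uIcc.trans (Set.uIcc_subset_Icc hu hv)

lemma abs_sub_le_of_mem {u v : ℝ} (hu : u ∈ Icc a b) (hv : v ∈ Icc a b) :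
    |v - u| ≤ b - a := by
  rw [abs_sub_le_iff]
  constructor <;> [skip; skip] <;>
    · obtain ⟨h1, h2⟩ := hu; obtain ⟨h3, h4⟩ := hv; linarith

/-- Integrability of `η ↦ (∫ θ in u η..v η, L θ η) ⬝ y η`. -/
lemma int_marg_kernel_y {q' : ℕ} {L : ℝ → ℝ → Matrix (Fin q') (Fin r) ℝ}
    (hab : a ≤ b)
    (hy : MemLp y 2 (volume.restrict (Icc a b)))
    (hL : ContinuousOn (fun z : ℝ × ℝ => L z.1 z.2) (Icc a b ×ˢ Icc a b))
    {u v : ℝ → ℝ} (hu : Measurable u) (hv : Measurable v)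
    (hu1 : ∀ s ∈ Icc a b, u s ∈ Icc a b) (hv1 : ∀ s ∈ Icc a b, v s ∈ Icc a b) :
    Integrable (fun η => mulVecE (∫ θ in u η..v η, L θ η) (y η))
      (volume.restrict (Icc a b)) := by
  obtain ⟨C, hC⟩ := (isCompact_Icc.prod isCompact_Icc).exists_bound_of_continuousOn hL
  have hC0 : 0 ≤ C :=
    le_trans (norm_nonneg _) (hC (a, a) ⟨Set.left_mem_Icc.2 hab, Set.left_mem_Icc.2 hab⟩)
  have hfA : AEStronglyMeasurable (fun z : ℝ × ℝ => L z.2 z.1)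
      ((volume.restrict (Icc a b)).prod (volume.restrict (Ioc a b))) := by
    rw [Measure.prod_restrict]
    refine ContinuousOn.aestronglyMeasurable ?_ (measurableSet_Icc.prod measurableSet_Ioc)
    exact hL.comp continuous_swap.continuousOn
      (fun z hz => ⟨Set.Ioc_subset_Icc_self hz.2, hz.1⟩)
  have hfi : ∀ η ∈ Icc a b, ∀ c ∈ Icc a b, IntervalIntegrable (fun θ => L θ η) volume a c := by
    intro η hη c hc
    refine ContinuousOn.intervalIntegrable ?_
    refine (hL.comp (continuous_id.prodMk continuous_const).continuousOn (fun θ hθ => ⟨hθ, hη⟩)).mono ?_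
    exact Set.uIcc_subset_Icc (Set.left_mem_Icc.2 hab) hc
  have hKm : AEStronglyMeasurable (fun η => ∫ θ in u η..v η, L θ η)
      (volume.restrict (Icc a b)) := asm_marg hfA hfi hu hv hu1 hv1
  refine int_kernel_y hy hKm (C := C * (b - a)) ?_
  intro η hη
  calc ‖∫ θ in u η..v η, L θ η‖ ≤ C * |v η - u η| :=
        intervalIntegral.norm_integral_le_of_norm_le_const
          (fun θ hθ => hC (θ, η) ⟨uIoc_sub_Icc (hu1 η hη) (hv1 η hη) hθ, hη⟩)
    _ ≤ C * (b - a) :=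
        mul_le_mul_of_nonneg_left (abs_sub_le_of_mem (hu1 η hη) (hv1 η hη)) hC0

/-- ASM and boundedness of `θ ↦ ∫ η in u θ..v θ, K θ η ⬝ y η`. -/
lemma vec_marg {u' : ℕ} {K : ℝ → ℝ → Matrix (Fin u') (Fin r) ℝ}
    (hab : a ≤ b) (hy : MemLp y 2 (volume.restrict (Icc a b)))
    (hK : ContinuousOn (fun z : ℝ × ℝ => K z.1 z.2) (Icc a b ×ˢ Icc a b))
    {u v : ℝ → ℝ} (hu : Measurable u) (hv : Measurable v)
    (hu1 : ∀ s ∈ Icc a b, u s ∈ Icc a b) (hv1 : ∀ s ∈ Icc a b, v s ∈ Icc a b) :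
    AEStronglyMeasurable (fun θ => ∫ η in u θ..v θ, mulVecE (K θ η) (y η))
        (volume.restrict (Icc a b))
    ∧ ∃ D, ∀ θ ∈ Icc a b, ‖∫ η in u θ..v θ, mulVecE (K θ η) (y η)‖ ≤ D := by
  obtain ⟨C, hC⟩ := (isCompact_Icc.prod isCompact_Icc).exists_bound_of_continuousOn hK
  have hslice : ∀ θ ∈ Icc a b, ContinuousOn (fun η => K θ η) (Icc a b) := fun θ hθ =>
    hK.comp (continuous_const.prodMk continuous_id).continuousOn (fun η hη => ⟨hθ, hη⟩)
  have hint : ∀ θ ∈ Icc a b, Integrable (fun η => mulVecE (K θ η) (y η))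
      (volume.restrict (Icc a b)) := fun θ hθ => int_kernel_y_cont hy (hslice θ hθ)
  constructor
  · refine asm_marg ?_ ?_ hu hv hu1 hv1
    · have h1 : AEStronglyMeasurable (fun z : ℝ × ℝ => K z.1 z.2)
          ((volume.restrict (Icc a b)).prod (volume.restrict (Ioc a b))) := by
        rw [Measure.prod_restrict]
        exact (hK.mono (Set.prod_mono_right Set.Ioc_subset_Icc_self)).aestronglyMeasurable
          (measurableSet_Icc.prod measurableSet_Ioc)
      have h2 : AEStronglyMeasurable (fun z : ℝ × ℝ => y z.2)
          ((volume.restrict (Icc a b)).prod (volume.restrict (Ioc a b))) :=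
        (hy.aestronglyMeasurable.mono_measure
          (Measure.restrict_mono Set.Ioc_subset_Icc_self le_rfl)).comp_snd
      exact (mulCLM u' r).aestronglyMeasurable_comp₂ h1 h2
    · intro θ hθ c hc
      exact II (hint θ hθ) le_rfl hc.2 hc.1 hab
  · haveI := finMeas (a := a) (b := b)
    have hyi : Integrable y (volume.restrict (Icc a b)) := hy.integrable one_le_two
    refine ⟨∫ η in Icc a b, (‖mulCLM u' r‖ * C) * ‖y η‖, fun θ hθ => ?_⟩
    calc ‖∫ η in u θ..v θ, mulVecE (K θ η) (y η)‖
        ≤ ∫ η in Ι (u θ) (v θ), ‖mulVecE (K θ η) (y η)‖ :=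
          intervalIntegral.norm_integral_le_integral_norm_uIoc
      _ ≤ ∫ η in Icc a b, ‖mulVecE (K θ η) (y η)‖ := by
          refine setIntegral_mono_set (hint θ hθ).norm ?_ ?_
          · exact ae_of_all _ fun η => norm_nonneg _
          · exact HasSubset.Subset.eventuallyLE (uIoc_sub_Icc (hu1 θ hθ) (hv1 θ hθ))
      _ ≤ ∫ η in Icc a b, (‖mulCLM u' r‖ * C) * ‖y η‖ := by
          refine setIntegral_mono_on (hint θ hθ).norm
            ((hyi.norm.const_mul _)) measurableSet_Icc ?_
          intro η hη
          calc ‖mulVecE (K θ η) (y η)‖ ≤ ‖mulCLM u' r‖ * ‖K θ η‖ * ‖y η‖ := norm_mulVecE_le _ _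
            _ ≤ ‖mulCLM u' r‖ * C * ‖y η‖ :=
                mul_le_mul_of_nonneg_right
                  (mul_le_mul_of_nonneg_left (hC (θ, η) ⟨hθ, hη⟩)
                    (mulCLM u' r).opNorm_nonneg) (norm_nonneg _)
            _ = (‖mulCLM u' r‖ * C) * ‖y η‖ := by ring

/-- bounded ASM matrix times bounded ASM vector is integrable on a finite measure. -/
lemma int_bounded_pair {q' u' : ℕ} {M : ℝ → Matrix (Fin q') (Fin u') ℝ}
    {g : ℝ → EuclideanSpace ℝ (Fin u')}
    (hM : AEStronglyMeasurable M (volume.restrict (Icc a b)))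
    (hg : AEStronglyMeasurable g (volume.restrict (Icc a b)))
    {C D : ℝ} (hC : ∀ s ∈ Icc a b, ‖M s‖ ≤ C) (hD : ∀ s ∈ Icc a b, ‖g s‖ ≤ D) :
    Integrable (fun θ => mulVecE (M θ) (g θ)) (volume.restrict (Icc a b)) := by
  haveI := finMeas (a := a) (b := b)
  have hD0 : ∀ s ∈ Icc a b, (0:ℝ) ≤ D ∨ True := fun _ _ => Or.inr trivial
  refine Integrable.mono' (integrable_const (‖mulCLM q' u'‖ * C * D))
    ((mulCLM q' u').aestronglyMeasurable_comp₂ hM hg) ?_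
  refine (ae_restrict_iff' measurableSet_Icc).2 (ae_of_all _ fun s hs => ?_)
  calc ‖mulVecE (M s) (g s)‖ ≤ ‖mulCLM q' u'‖ * ‖M s‖ * ‖g s‖ := norm_mulVecE_le _ _
    _ ≤ ‖mulCLM q' u'‖ * C * D := by
        have h1 := hC s hs
        have h2 := hD s hs
        have h3 := (mulCLM q' u').opNorm_nonneg
        have h4 := norm_nonneg (M s)
        have h5 := norm_nonneg (g s)
        have h6 : ‖M s‖ * ‖g s‖ ≤ C * D := mul_le_mul h1 h2 h5 (le_trans h4 h1)
        calc ‖mulCLM q' u'‖ * ‖M s‖ * ‖g s‖ = ‖mulCLM q' u'‖ * (‖M s‖ * ‖g s‖) := by ring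
          _ ≤ ‖mulCLM q' u'‖ * (C * D) := mul_le_mul_of_nonneg_left h6 h3
          _ = ‖mulCLM q' u'‖ * C * D := by ring
end marg2

section fubini
variable {a b : ℝ} {E : Type*} [NormedAddCommGroup E] [NormedSpace ℝ E] [CompleteSpace E]

lemma prod_le_prod_Icc {c d u v : ℝ} (hc : c ∈ Icc a b) (hd : d ∈ Icc a b)
    (hu : u ∈ Icc a b) (hv : v ∈ Icc a b) :
    (volume.restrict (Ioc c d)).prod (volume.restrict (Ioc u v))
      ≤ (volume.restrict (Icc a b)).prod (volume.restrict (Icc a b)) := by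
  rw [Measure.prod_restrict, Measure.prod_restrict]
  refine Measure.restrict_mono (Set.prod_mono ?_ ?_) le_rfl
  · exact Set.Ioc_subset_Icc_self.trans (Set.Icc_subset_Icc hc.1 hd.2)
  · exact Set.Ioc_subset_Icc_self.trans (Set.Icc_subset_Icc hu.1 hv.2)

omit [CompleteSpace E] in
lemma rect_swap {f : ℝ → ℝ → E}
    (hf : Integrable (fun z : ℝ × ℝ => f z.1 z.2)
      ((volume.restrict (Icc a b)).prod (volume.restrict (Icc a b))))
    {c d u v : ℝ} (hc : c ∈ Icc a b) (hd : d ∈ Icc a b) (hu : u ∈ Icc a b) (hv : v ∈ Icc a b)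
    (hcd : c ≤ d) (huv : u ≤ v) :
    ∫ θ in c..d, ∫ η in u..v, f θ η = ∫ η in u..v, ∫ θ in c..d, f θ η := by
  rw [intervalIntegral.integral_of_le hcd, intervalIntegral.integral_of_le huv]
  simp_rw [intervalIntegral.integral_of_le huv, intervalIntegral.integral_of_le hcd]
  exact integral_integral_swap (hf.mono_measure (prod_le_prod_Icc hc hd hu hv))

lemma tri_swap1 {f : ℝ → ℝ → E}
    (hf : Integrable (fun z : ℝ × ℝ => f z.1 z.2)
      ((volume.restrict (Icc a b)).prod (volume.restrict (Icc a b))))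
    {c d : ℝ} (hc : c ∈ Icc a b) (hd : d ∈ Icc a b) (hcd : c ≤ d) :
    ∫ θ in c..d, ∫ η in c..θ, f θ η = ∫ η in c..d, ∫ θ in η..d, f θ η := by
  have hGint : Integrable (Function.uncurry fun θ η =>
      ({z : ℝ × ℝ | z.2 ≤ z.1}.indicator (fun z => f z.1 z.2)) (θ, η))
      ((volume.restrict (Ioc c d)).prod (volume.restrict (Ioc c d))) :=
    (hf.mono_measure (prod_le_prod_Icc hc hd hc hd)).indicator
      (measurableSet_le measurable_snd measurable_fst)
  have step1 : ∫ θ in c..d, ∫ η in c..θ, f θ η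
      = ∫ θ in Ioc c d, (∫ η in Ioc c d,
          ({z : ℝ × ℝ | z.2 ≤ z.1}.indicator (fun z => f z.1 z.2)) (θ, η)) := by
    rw [intervalIntegral.integral_of_le hcd]
    refine setIntegral_congr_fun measurableSet_Ioc (fun θ hθ => ?_)
    calc ∫ η in c..θ, f θ η = ∫ η in Ioc c θ, f θ η :=
          intervalIntegral.integral_of_le hθ.1.le
      _ = ∫ η in Ioc c θ, f θ η ∂(volume.restrict (Ioc c d)) := by
          rw [Measure.restrict_restrict measurableSet_Ioc,
            Set.inter_eq_left.2 (Set.Ioc_subset_Ioc_right hθ.2)]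
      _ = ∫ η in Ioc c d, (Ioc c θ).indicator (fun η => f θ η) η :=
          (integral_indicator measurableSet_Ioc).symm
      _ = ∫ η in Ioc c d, ({z : ℝ × ℝ | z.2 ≤ z.1}.indicator (fun z => f z.1 z.2)) (θ, η) := by
          refine setIntegral_congr_fun measurableSet_Ioc (fun η hη => ?_)
          by_cases h : η ≤ θ
          · rw [Set.indicator_of_mem (show η ∈ Ioc c θ from ⟨hη.1, h⟩),
              Set.indicator_of_mem (show (θ, η) ∈ {z : ℝ × ℝ | z.2 ≤ z.1} from h)]
          · rw [Set.indicator_of_notMem (show η ∉ Ioc c θ from fun hmem => h hmem.2),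
              Set.indicator_of_notMem
                (show (θ, η) ∉ {z : ℝ × ℝ | z.2 ≤ z.1} from fun hmem => h hmem)]
  have step3 : ∫ η in Ioc c d, (∫ θ in Ioc c d,
      ({z : ℝ × ℝ | z.2 ≤ z.1}.indicator (fun z => f z.1 z.2)) (θ, η))
      = ∫ η in c..d, ∫ θ in η..d, f θ η := by
    rw [intervalIntegral.integral_of_le hcd]
    refine setIntegral_congr_fun measurableSet_Ioc (fun η hη => ?_)
    calc ∫ θ in Ioc c d, ({z : ℝ × ℝ | z.2 ≤ z.1}.indicator (fun z => f z.1 z.2)) (θ, η)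
        = ∫ θ in Ioc c d, (Ici η).indicator (fun θ => f θ η) θ := by
          refine setIntegral_congr_fun measurableSet_Ioc (fun θ hθ => ?_)
          by_cases h : η ≤ θ
          · rw [Set.indicator_of_mem (show (θ, η) ∈ {z : ℝ × ℝ | z.2 ≤ z.1} from h),
              Set.indicator_of_mem (show θ ∈ Ici η from h)]
          · rw [Set.indicator_of_notMem
                (show (θ, η) ∉ {z : ℝ × ℝ | z.2 ≤ z.1} from fun hmem => h hmem),
              Set.indicator_of_notMem (show θ ∉ Ici η from fun hmem => h hmem)]
      _ = ∫ θ in Ici η, f θ η ∂(volume.restrict (Ioc c d)) :=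
          integral_indicator measurableSet_Ici
      _ = ∫ θ in Ici η ∩ Ioc c d, f θ η := by
          rw [Measure.restrict_restrict measurableSet_Ici]
      _ = ∫ θ in Icc η d, f θ η := by
          have hseq : Ici η ∩ Ioc c d = Icc η d := by
            ext θ
            simp only [Set.mem_inter_iff, Set.mem_Ici, Set.mem_Ioc, Set.mem_Icc]
            exact ⟨fun h => ⟨h.1, h.2.2⟩, fun h => ⟨h.1, hη.1.trans_le h.1, h.2⟩⟩
          rw [hseq]
      _ = ∫ θ in Ioc η d, f θ η := integral_Icc_eq_integral_Ioc
      _ = ∫ θ in η..d, f θ η := (intervalIntegral.integral_of_le hη.2).symm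
  rw [step1, integral_integral_swap hGint, step3]

lemma tri_swap2 {f : ℝ → ℝ → E}
    (hf : Integrable (fun z : ℝ × ℝ => f z.1 z.2)
      ((volume.restrict (Icc a b)).prod (volume.restrict (Icc a b))))
    {c d : ℝ} (hc : c ∈ Icc a b) (hd : d ∈ Icc a b) (hcd : c ≤ d) :
    ∫ θ in c..d, ∫ η in θ..d, f θ η = ∫ η in c..d, ∫ θ in c..η, f θ η := by
  have hGint : Integrable (Function.uncurry fun θ η =>
      ({z : ℝ × ℝ | z.1 < z.2}.indicator (fun z => f z.1 z.2)) (θ, η))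
      ((volume.restrict (Ioc c d)).prod (volume.restrict (Ioc c d))) :=
    (hf.mono_measure (prod_le_prod_Icc hc hd hc hd)).indicator
      (measurableSet_lt measurable_fst measurable_snd)
  have step1 : ∫ θ in c..d, ∫ η in θ..d, f θ η
      = ∫ θ in Ioc c d, (∫ η in Ioc c d,
          ({z : ℝ × ℝ | z.1 < z.2}.indicator (fun z => f z.1 z.2)) (θ, η)) := by
    rw [intervalIntegral.integral_of_le hcd]
    refine setIntegral_congr_fun measurableSet_Ioc (fun θ hθ => ?_)
    calc ∫ η in θ..d, f θ η = ∫ η in Ioc θ d, f θ η :=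
          intervalIntegral.integral_of_le hθ.2
      _ = ∫ η in Ioc θ d, f θ η ∂(volume.restrict (Ioc c d)) := by
          rw [Measure.restrict_restrict measurableSet_Ioc,
            Set.inter_eq_left.2 (Set.Ioc_subset_Ioc_left hθ.1.le)]
      _ = ∫ η in Ioc c d, (Ioc θ d).indicator (fun η => f θ η) η :=
          (integral_indicator measurableSet_Ioc).symm
      _ = ∫ η in Ioc c d, ({z : ℝ × ℝ | z.1 < z.2}.indicator (fun z => f z.1 z.2)) (θ, η) := by
          refine setIntegral_congr_fun measurableSet_Ioc (fun η hη => ?_)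
          by_cases h : θ < η
          · rw [Set.indicator_of_mem (show η ∈ Ioc θ d from ⟨h, hη.2⟩),
              Set.indicator_of_mem (show (θ, η) ∈ {z : ℝ × ℝ | z.1 < z.2} from h)]
          · rw [Set.indicator_of_notMem (show η ∉ Ioc θ d from fun hmem => h hmem.1),
              Set.indicator_of_notMem
                (show (θ, η) ∉ {z : ℝ × ℝ | z.1 < z.2} from fun hmem => h hmem)]
  have step3 : ∫ η in Ioc c d, (∫ θ in Ioc c d,
      ({z : ℝ × ℝ | z.1 < z.2}.indicator (fun z => f z.1 z.2)) (θ, η))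
      = ∫ η in c..d, ∫ θ in c..η, f θ η := by
    rw [intervalIntegral.integral_of_le hcd]
    refine setIntegral_congr_fun measurableSet_Ioc (fun η hη => ?_)
    calc ∫ θ in Ioc c d, ({z : ℝ × ℝ | z.1 < z.2}.indicator (fun z => f z.1 z.2)) (θ, η)
        = ∫ θ in Ioc c d, (Iio η).indicator (fun θ => f θ η) θ := by
          refine setIntegral_congr_fun measurableSet_Ioc (fun θ hθ => ?_)
          by_cases h : θ < η
          · rw [Set.indicator_of_mem (show (θ, η) ∈ {z : ℝ × ℝ | z.1 < z.2} from h),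
              Set.indicator_of_mem (show θ ∈ Iio η from h)]
          · rw [Set.indicator_of_notMem
                (show (θ, η) ∉ {z : ℝ × ℝ | z.1 < z.2} from fun hmem => h hmem),
              Set.indicator_of_notMem (show θ ∉ Iio η from fun hmem => h hmem)]
      _ = ∫ θ in Iio η, f θ η ∂(volume.restrict (Ioc c d)) :=
          integral_indicator measurableSet_Iio
      _ = ∫ θ in Iio η ∩ Ioc c d, f θ η := by
          rw [Measure.restrict_restrict measurableSet_Iio]
      _ = ∫ θ in Ioo c η, f θ η := by
          have hseq : Iio η ∩ Ioc c d = Ioo c η := by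
            ext θ
            simp only [Set.mem_inter_iff, Set.mem_Iio, Set.mem_Ioc, Set.mem_Ioo]
            exact ⟨fun h => ⟨h.2.1, h.1⟩, fun h => ⟨h.2, h.1, h.2.le.trans hη.2⟩⟩
          rw [hseq]
      _ = ∫ θ in Ioc c η, f θ η := integral_Ioc_eq_integral_Ioo.symm
      _ = ∫ θ in c..η, f θ η := (intervalIntegral.integral_of_le hη.1.le).symm
  rw [step1, integral_integral_swap hGint, step3]
end fubini

section pull
variable {a b : ℝ} {r : ℕ} {y : ℝ → EuclideanSpace ℝ (Fin r)}

lemma mulVecE_intervalIntegral {u' v' : ℕ} (M : Matrix (Fin u') (Fin v') ℝ)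
    {g : ℝ → EuclideanSpace ℝ (Fin v')} {c d : ℝ} (hg : IntervalIntegrable g volume c d) :
    mulVecE M (∫ t in c..d, g t) = ∫ t in c..d, mulVecE M (g t) :=
  ((mulCLM u' v' M).intervalIntegral_comp_comm hg).symm

lemma intervalIntegral_mulVecE {u' v' : ℕ} {M : ℝ → Matrix (Fin u') (Fin v') ℝ}
    (w : EuclideanSpace ℝ (Fin v')) {c d : ℝ} (hM : IntervalIntegrable M volume c d) :
    ∫ t in c..d, mulVecE (M t) w = mulVecE (∫ t in c..d, M t) w :=
  (appCLM w).intervalIntegral_comp_comm hM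

lemma contOn_mul2 {u' v' w' : ℕ} {s : Set (ℝ × ℝ)} {M : ℝ × ℝ → Matrix (Fin u') (Fin v') ℝ}
    {N : ℝ × ℝ → Matrix (Fin v') (Fin w') ℝ}
    (hM : ContinuousOn M s) (hN : ContinuousOn N s) :
    ContinuousOn (fun z => M z * N z) s := by
  have h : Continuous (fun p : Matrix (Fin u') (Fin v') ℝ × Matrix (Fin v') (Fin w') ℝ =>
      p.1 * p.2) := continuous_fst.matrix_mul continuous_snd
  exact h.comp_continuousOn (hM.prodMk hN)

lemma contOn_mul {u' v' w' : ℕ} {s : Set ℝ} {M : ℝ → Matrix (Fin u') (Fin v') ℝ}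
    {N : ℝ → Matrix (Fin v') (Fin w') ℝ}
    (hM : ContinuousOn M s) (hN : ContinuousOn N s) :
    ContinuousOn (fun t => M t * N t) s := by
  have h : Continuous (fun p : Matrix (Fin u') (Fin v') ℝ × Matrix (Fin v') (Fin w') ℝ =>
      p.1 * p.2) := continuous_fst.matrix_mul continuous_snd
  exact h.comp_continuousOn (hM.prodMk hN)

lemma contSlice₁ {u' v' : ℕ} {K : ℝ → ℝ → Matrix (Fin u') (Fin v') ℝ}
    (hK : ContinuousOn (fun z : ℝ × ℝ => K z.1 z.2) (Icc a b ×ˢ Icc a b))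
    {s : ℝ} (hs : s ∈ Icc a b) : ContinuousOn (fun η => K s η) (Icc a b) :=
  hK.comp (continuous_const.prodMk continuous_id).continuousOn (fun η hη => ⟨hs, hη⟩)

lemma contSlice₂ {u' v' : ℕ} {K : ℝ → ℝ → Matrix (Fin u') (Fin v') ℝ}
    (hK : ContinuousOn (fun z : ℝ × ℝ => K z.1 z.2) (Icc a b ×ˢ Icc a b))
    {η : ℝ} (hη : η ∈ Icc a b) : ContinuousOn (fun θ => K θ η) (Icc a b) :=
  hK.comp (continuous_id.prodMk continuous_const).continuousOn (fun θ hθ => ⟨hθ, hη⟩)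

lemma contFst {u' v' : ℕ} {M : ℝ → Matrix (Fin u') (Fin v') ℝ}
    (hM : ContinuousOn M (Icc a b)) :
    ContinuousOn (fun z : ℝ × ℝ => M z.1) (Icc a b ×ˢ Icc a b) :=
  hM.comp continuous_fst.continuousOn (fun z hz => hz.1)

lemma contSnd {u' v' : ℕ} {M : ℝ → Matrix (Fin u') (Fin v') ℝ}
    (hM : ContinuousOn M (Icc a b)) :
    ContinuousOn (fun z : ℝ × ℝ => M z.2) (Icc a b ×ˢ Icc a b) :=
  hM.comp continuous_snd.continuousOn (fun z hz => hz.2)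

/-- interval integrability of a continuous-on-`Icc` function between points of `Icc`. -/
lemma IIc {E : Type*} [NormedAddCommGroup E] {f : ℝ → E}
    (hf : ContinuousOn f (Icc a b)) {c d : ℝ} (hc : c ∈ Icc a b) (hd : d ∈ Icc a b) :
    IntervalIntegrable f volume c d :=
  (hf.mono (Set.uIcc_subset_Icc hc hd)).intervalIntegrable

lemma II' {E : Type*} [NormedAddCommGroup E] {f : ℝ → E}
    (hf : Integrable f (volume.restrict (Icc a b))) {c d : ℝ}
    (hc : c ∈ Icc a b) (hd : d ∈ Icc a b) :
    IntervalIntegrable f volume c d := II hf hc.1 hd.2 hd.1 hc.2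

/-- integrability of vector-valued marginals. -/
lemma int_vec_marg {u' : ℕ} {K : ℝ → ℝ → Matrix (Fin u') (Fin r) ℝ}
    (hab : a ≤ b) (hy : MemLp y 2 (volume.restrict (Icc a b)))
    (hK : ContinuousOn (fun z : ℝ × ℝ => K z.1 z.2) (Icc a b ×ˢ Icc a b))
    {u v : ℝ → ℝ} (hu : Measurable u) (hv : Measurable v)
    (hu1 : ∀ s ∈ Icc a b, u s ∈ Icc a b) (hv1 : ∀ s ∈ Icc a b, v s ∈ Icc a b) :
    Integrable (fun θ => ∫ η in u θ..v θ, mulVecE (K θ η) (y η))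
      (volume.restrict (Icc a b)) := by
  haveI := finMeas (a := a) (b := b)
  obtain ⟨hasm, D, hD⟩ := vec_marg hab hy hK hu hv hu1 hv1
  refine Integrable.mono' (integrable_const D) hasm ?_
  exact (ae_restrict_iff' measurableSet_Icc).2 (ae_of_all _ fun θ hθ => hD θ hθ)
end pull

lemma expand_w {p' n' m' r' : ℕ} {a b : ℝ}
    (M : Matrix (Fin p') (Fin n') ℝ)
    (Q₂ : ℝ → Matrix (Fin n') (Fin m') ℝ) (R₀ : ℝ → Matrix (Fin n') (Fin r') ℝ)
    (R₁ R₂ : ℝ → ℝ → Matrix (Fin n') (Fin r') ℝ)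
    (x : EuclideanSpace ℝ (Fin m')) {y : ℝ → EuclideanSpace ℝ (Fin r')}
    (hy : MemLp y 2 (volume.restrict (Icc a b)))
    (hR₁ : ContinuousOn (fun z : ℝ × ℝ => R₁ z.1 z.2) (Icc a b ×ˢ Icc a b))
    (hR₂ : ContinuousOn (fun z : ℝ × ℝ => R₂ z.1 z.2) (Icc a b ×ˢ Icc a b))
    {θ : ℝ} (hθ : θ ∈ Icc a b) :
    mulVecE M (fourPIfun a b Q₂ R₀ R₁ R₂ x y θ)
      = mulVecE (M * Q₂ θ) x + mulVecE (M * R₀ θ) (y θ)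
        + (∫ η in a..θ, mulVecE (M * R₁ θ η) (y η))
        + ∫ η in θ..b, mulVecE (M * R₂ θ η) (y η) := by
  have hab' : a ≤ b := hθ.1.trans hθ.2
  have h1 : IntervalIntegrable (fun η => mulVecE (R₁ θ η) (y η)) volume a θ :=
    II' (int_kernel_y_cont hy (contSlice₁ hR₁ hθ)) (Set.left_mem_Icc.2 hab') hθ
  have h2 : IntervalIntegrable (fun η => mulVecE (R₂ θ η) (y η)) volume θ b :=
    II' (int_kernel_y_cont hy (contSlice₁ hR₂ hθ)) hθ (Set.right_mem_Icc.2 hab')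
  simp only [fourPIfun, threePI]
  rw [mulVecE_add, mulVecE_add, mulVecE_add, mulVecE_mulVecE, mulVecE_mulVecE,
    mulVecE_intervalIntegral M h1, mulVecE_intervalIntegral M h2]
  simp_rw [mulVecE_mulVecE]
  abel

set_option maxHeartbeats 1000000 in
lemma part1 {p k n m r : ℕ} {a b : ℝ} (hab : a < b)
    (A : Matrix (Fin p) (Fin k) ℝ)
    (B₁ : ℝ → Matrix (Fin p) (Fin n) ℝ)
    (P : Matrix (Fin k) (Fin m) ℝ)
    (Q₁ : ℝ → Matrix (Fin k) (Fin r) ℝ) (Q₂ : ℝ → Matrix (Fin n) (Fin m) ℝ)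
    (R₀ : ℝ → Matrix (Fin n) (Fin r) ℝ) (R₁ R₂ : ℝ → ℝ → Matrix (Fin n) (Fin r) ℝ)
    (hB₁ : ContinuousOn B₁ (Icc a b))
    (hQ₁ : ContinuousOn Q₁ (Icc a b)) (hQ₂ : ContinuousOn Q₂ (Icc a b))
    (hR₀ : ContinuousOn R₀ (Icc a b))
    (hR₁ : ContinuousOn (fun z : ℝ × ℝ => R₁ z.1 z.2) (Icc a b ×ˢ Icc a b))
    (hR₂ : ContinuousOn (fun z : ℝ × ℝ => R₂ z.1 z.2) (Icc a b ×ˢ Icc a b))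
    (x : EuclideanSpace ℝ (Fin m)) (y : ℝ → EuclideanSpace ℝ (Fin r))
    (hy : MemLp y 2 (volume.restrict (Icc a b))) :
    fourPIfin a b A B₁ (fourPIfin a b P Q₁ x y) (fourPIfun a b Q₂ R₀ R₁ R₂ x y)
        = fourPIfin a b
            (A * P + ∫ s in a..b, B₁ s * Q₂ s)
            (fun s => A * Q₁ s + B₁ s * R₀ s + (∫ η in s..b, B₁ η * R₁ η s)
              + ∫ η in a..s, B₁ η * R₂ η s)
            x y := by
  have hab' : a ≤ b := hab.le
  have haI : a ∈ Icc a b := Set.left_mem_Icc.2 hab'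
  have hbI : b ∈ Icc a b := Set.right_mem_Icc.2 hab'
  have hQ₁y : Integrable (fun s => mulVecE (Q₁ s) (y s)) (volume.restrict (Icc a b)) :=
    int_kernel_y_cont hy hQ₁
  -- continuity of combined kernels
  have hK₁ : ContinuousOn (fun z : ℝ × ℝ => B₁ z.1 * R₁ z.1 z.2) (Icc a b ×ˢ Icc a b) :=
    contOn_mul2 (contFst hB₁) hR₁
  have hK₂ : ContinuousOn (fun z : ℝ × ℝ => B₁ z.1 * R₂ z.1 z.2) (Icc a b ×ˢ Icc a b) :=
    contOn_mul2 (contFst hB₁) hR₂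
  have h1 : mulVecE A (fourPIfin a b P Q₁ x y)
      = mulVecE (A * P) x + ∫ s in a..b, mulVecE (A * Q₁ s) (y s) := by
    simp only [fourPIfin]
    rw [mulVecE_add, mulVecE_mulVecE, mulVecE_intervalIntegral A (II' hQ₁y haI hbI)]
    simp_rw [mulVecE_mulVecE]
  have c0 : ContinuousOn (fun s => mulVecE (B₁ s * Q₂ s) x) (Icc a b) := by
    have := (appCLM x).continuous.comp_continuousOn (contOn_mul hB₁ hQ₂)
    simpa only [Function.comp_def, appCLM_apply] using this
  have i0 : IntervalIntegrable (fun s => mulVecE (B₁ s * Q₂ s) x) volume a b :=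
    IIc c0 haI hbI
  have i1 : IntervalIntegrable (fun s => mulVecE (B₁ s * R₀ s) (y s)) volume a b :=
    II' (int_kernel_y_cont hy (contOn_mul hB₁ hR₀)) haI hbI
  have i2 : IntervalIntegrable (fun s => ∫ η in a..s, mulVecE (B₁ s * R₁ s η) (y η))
      volume a b :=
    II' (int_vec_marg (K := fun θ η => B₁ θ * R₁ θ η) hab' hy hK₁ measurable_const measurable_id
      (fun _ _ => haI) (fun _ hs => hs)) haI hbI
  have i3 : IntervalIntegrable (fun s => ∫ η in s..b, mulVecE (B₁ s * R₂ s η) (y η))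
      volume a b :=
    II' (int_vec_marg (K := fun θ η => B₁ θ * R₂ θ η) hab' hy hK₂ measurable_id measurable_const
      (fun _ hs => hs) (fun _ _ => hbI)) haI hbI
  have h2 : ∫ s in a..b, mulVecE (B₁ s) (fourPIfun a b Q₂ R₀ R₁ R₂ x y s)
      = (∫ s in a..b, mulVecE (B₁ s * Q₂ s) x) + (∫ s in a..b, mulVecE (B₁ s * R₀ s) (y s))
        + (∫ s in a..b, ∫ η in a..s, mulVecE (B₁ s * R₁ s η) (y η))
        + ∫ s in a..b, ∫ η in s..b, mulVecE (B₁ s * R₂ s η) (y η) := by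
    rw [intervalIntegral.integral_congr (g := fun s =>
        mulVecE (B₁ s * Q₂ s) x + mulVecE (B₁ s * R₀ s) (y s)
        + (∫ η in a..s, mulVecE (B₁ s * R₁ s η) (y η))
        + ∫ η in s..b, mulVecE (B₁ s * R₂ s η) (y η))
        (fun s hs => expand_w (B₁ s) Q₂ R₀ R₁ R₂ x hy hR₁ hR₂
          (by rwa [uIcc_of_le hab'] at hs))]
    rw [intervalIntegral.integral_add ((i0.add i1).add i2) i3,
      intervalIntegral.integral_add (i0.add i1) i2,
      intervalIntegral.integral_add i0 i1]
  have h3 : ∫ s in a..b, ∫ η in a..s, mulVecE (B₁ s * R₁ s η) (y η)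
      = ∫ η in a..b, mulVecE (∫ θ in η..b, B₁ θ * R₁ θ η) (y η) := by
    rw [tri_swap1 (f := fun θ η => mulVecE (B₁ θ * R₁ θ η) (y η))
        (int_kernel_y_prod (K := fun θ η => B₁ θ * R₁ θ η) hy hK₁) haI hbI hab']
    refine intervalIntegral.integral_congr (fun η hη => ?_)
    rw [uIcc_of_le hab'] at hη
    exact intervalIntegral_mulVecE (y η) (IIc (contSlice₂ (K := fun θ η => B₁ θ * R₁ θ η) hK₁ hη) hη hbI)
  have h4 : ∫ s in a..b, ∫ η in s..b, mulVecE (B₁ s * R₂ s η) (y η)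
      = ∫ η in a..b, mulVecE (∫ θ in a..η, B₁ θ * R₂ θ η) (y η) := by
    rw [tri_swap2 (f := fun θ η => mulVecE (B₁ θ * R₂ θ η) (y η))
        (int_kernel_y_prod (K := fun θ η => B₁ θ * R₂ θ η) hy hK₂) haI hbI hab']
    refine intervalIntegral.integral_congr (fun η hη => ?_)
    rw [uIcc_of_le hab'] at hη
    exact intervalIntegral_mulVecE (y η) (IIc (contSlice₂ (K := fun θ η => B₁ θ * R₂ θ η) hK₂ hη) haI hη)
  have h0 : ∫ s in a..b, mulVecE (B₁ s * Q₂ s) x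
      = mulVecE (∫ s in a..b, B₁ s * Q₂ s) x :=
    intervalIntegral_mulVecE x (IIc (contOn_mul hB₁ hQ₂) haI hbI)
  -- integrabilities for the RHS split
  have j0 : IntervalIntegrable (fun s => mulVecE (A * Q₁ s) (y s)) volume a b :=
    II' (int_kernel_y_cont hy (contOn_mul continuousOn_const hQ₁)) haI hbI
  have j2 : IntervalIntegrable (fun s => mulVecE (∫ η in s..b, B₁ η * R₁ η s) (y s))
      volume a b :=
    II' (int_marg_kernel_y (L := fun θ η => B₁ θ * R₁ θ η) hab' hy hK₁ measurable_id measurable_const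
      (fun _ hs => hs) (fun _ _ => hbI)) haI hbI
  have j3 : IntervalIntegrable (fun s => mulVecE (∫ η in a..s, B₁ η * R₂ η s) (y s))
      volume a b :=
    II' (int_marg_kernel_y (L := fun θ η => B₁ θ * R₂ θ η) hab' hy hK₂ measurable_const measurable_id
      (fun _ _ => haI) (fun _ hs => hs)) haI hbI
  have h5 : fourPIfin a b
      (A * P + ∫ s in a..b, B₁ s * Q₂ s)
      (fun s => A * Q₁ s + B₁ s * R₀ s + (∫ η in s..b, B₁ η * R₁ η s)
        + ∫ η in a..s, B₁ η * R₂ η s) x y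
      = mulVecE (A * P) x + mulVecE (∫ s in a..b, B₁ s * Q₂ s) x
        + ((∫ s in a..b, mulVecE (A * Q₁ s) (y s))
          + (∫ s in a..b, mulVecE (B₁ s * R₀ s) (y s))
          + (∫ s in a..b, mulVecE (∫ η in s..b, B₁ η * R₁ η s) (y s))
          + ∫ s in a..b, mulVecE (∫ η in a..s, B₁ η * R₂ η s) (y s)) := by
    simp only [fourPIfin]
    rw [add_mulVecE]
    congr 1
    rw [intervalIntegral.integral_congr (g := fun s =>
        mulVecE (A * Q₁ s) (y s) + mulVecE (B₁ s * R₀ s) (y s)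
        + mulVecE (∫ η in s..b, B₁ η * R₁ η s) (y s)
        + mulVecE (∫ η in a..s, B₁ η * R₂ η s) (y s))
        (fun s _ => by simp_rw [add_mulVecE])]
    rw [intervalIntegral.integral_add ((j0.add i1).add j2) j3,
      intervalIntegral.integral_add (j0.add i1) j2,
      intervalIntegral.integral_add j0 i1]
  show mulVecE A (fourPIfin a b P Q₁ x y)
      + ∫ s in a..b, mulVecE (B₁ s) (fourPIfun a b Q₂ R₀ R₁ R₂ x y s) = _
  rw [h1, h2, h3, h4, h0, h5]
  abel

set_option maxHeartbeats 2000000 in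
lemma part2 {q k n m r : ℕ} {a b : ℝ} (hab : a < b)
    (B₂ : ℝ → Matrix (Fin q) (Fin k) ℝ)
    (C₀ : ℝ → Matrix (Fin q) (Fin n) ℝ) (C₁ C₂ : ℝ → ℝ → Matrix (Fin q) (Fin n) ℝ)
    (P : Matrix (Fin k) (Fin m) ℝ)
    (Q₁ : ℝ → Matrix (Fin k) (Fin r) ℝ) (Q₂ : ℝ → Matrix (Fin n) (Fin m) ℝ)
    (R₀ : ℝ → Matrix (Fin n) (Fin r) ℝ) (R₁ R₂ : ℝ → ℝ → Matrix (Fin n) (Fin r) ℝ)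
    (hB₂ : ContinuousOn B₂ (Icc a b)) (hC₀ : ContinuousOn C₀ (Icc a b))
    (hC₁ : ContinuousOn (fun z : ℝ × ℝ => C₁ z.1 z.2) (Icc a b ×ˢ Icc a b))
    (hC₂ : ContinuousOn (fun z : ℝ × ℝ => C₂ z.1 z.2) (Icc a b ×ˢ Icc a b))
    (hQ₁ : ContinuousOn Q₁ (Icc a b)) (hQ₂ : ContinuousOn Q₂ (Icc a b))
    (hR₀ : ContinuousOn R₀ (Icc a b))
    (hR₁ : ContinuousOn (fun z : ℝ × ℝ => R₁ z.1 z.2) (Icc a b ×ˢ Icc a b))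
    (hR₂ : ContinuousOn (fun z : ℝ × ℝ => R₂ z.1 z.2) (Icc a b ×ˢ Icc a b))
    (x : EuclideanSpace ℝ (Fin m)) (y : ℝ → EuclideanSpace ℝ (Fin r))
    (hy : MemLp y 2 (volume.restrict (Icc a b)))
    {s : ℝ} (hs : s ∈ Icc a b) :
    fourPIfun a b B₂ C₀ C₁ C₂ (fourPIfin a b P Q₁ x y) (fourPIfun a b Q₂ R₀ R₁ R₂ x y) s
        = fourPIfun a b
            (fun s => B₂ s * P + C₀ s * Q₂ s + (∫ η in a..s, C₁ s η * Q₂ η)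
              + ∫ η in s..b, C₂ s η * Q₂ η)
            (fun s => C₀ s * R₀ s)
            (fun s η => B₂ s * Q₁ η + C₀ s * R₁ s η + C₁ s η * R₀ η
              + (∫ θ in a..η, C₁ s θ * R₂ θ η) + (∫ θ in η..s, C₁ s θ * R₁ θ η)
              + ∫ θ in s..b, C₂ s θ * R₁ θ η)
            (fun s η => B₂ s * Q₁ η + C₀ s * R₂ s η + C₂ s η * R₀ η
              + (∫ θ in a..s, C₁ s θ * R₂ θ η) + (∫ θ in s..η, C₂ s θ * R₂ θ η)
              + ∫ θ in η..b, C₂ s θ * R₁ θ η)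
            x y s := by
  have hab' : a ≤ b := hab.le
  have haI : a ∈ Icc a b := Set.left_mem_Icc.2 hab'
  have hbI : b ∈ Icc a b := Set.right_mem_Icc.2 hab'
  have has' : a ≤ s := hs.1
  have hsb' : s ≤ b := hs.2
  have hC₁s : ContinuousOn (fun θ => C₁ s θ) (Icc a b) := contSlice₁ hC₁ hs
  have hC₂s : ContinuousOn (fun θ => C₂ s θ) (Icc a b) := contSlice₁ hC₂ hs
  have hKA : ContinuousOn (fun z : ℝ × ℝ => C₁ s z.1 * R₁ z.1 z.2) (Icc a b ×ˢ Icc a b) :=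
    contOn_mul2 (contFst hC₁s) hR₁
  have hKB : ContinuousOn (fun z : ℝ × ℝ => C₁ s z.1 * R₂ z.1 z.2) (Icc a b ×ˢ Icc a b) :=
    contOn_mul2 (contFst hC₁s) hR₂
  have hKC : ContinuousOn (fun z : ℝ × ℝ => C₂ s z.1 * R₁ z.1 z.2) (Icc a b ×ˢ Icc a b) :=
    contOn_mul2 (contFst hC₂s) hR₁
  have hKD : ContinuousOn (fun z : ℝ × ℝ => C₂ s z.1 * R₂ z.1 z.2) (Icc a b ×ˢ Icc a b) :=
    contOn_mul2 (contFst hC₂s) hR₂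
  have hQ₁y : Integrable (fun η => mulVecE (Q₁ η) (y η)) (volume.restrict (Icc a b)) :=
    int_kernel_y_cont hy hQ₁
  have iBQ : Integrable (fun η => mulVecE (B₂ s * Q₁ η) (y η)) (volume.restrict (Icc a b)) :=
    int_kernel_y_cont hy (contOn_mul continuousOn_const hQ₁)
  -- β
  have hβ : mulVecE (B₂ s) (fourPIfin a b P Q₁ x y)
      = mulVecE (B₂ s * P) x + ((∫ η in a..s, mulVecE (B₂ s * Q₁ η) (y η))
        + ∫ η in s..b, mulVecE (B₂ s * Q₁ η) (y η)) := by
    simp only [fourPIfin]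
    rw [mulVecE_add, mulVecE_mulVecE, mulVecE_intervalIntegral _ (II' hQ₁y haI hbI)]
    simp_rw [mulVecE_mulVecE]
    rw [← intervalIntegral.integral_add_adjacent_intervals
      (II' iBQ haI hs) (II' iBQ hs hbI)]
  -- γ
  have hγ := expand_w (C₀ s) Q₂ R₀ R₁ R₂ x hy hR₁ hR₂ hs
  -- δ : the C₁ integral
  have d0 : ContinuousOn (fun θ => mulVecE (C₁ s θ * Q₂ θ) x) (Icc a b) := by
    have := (appCLM x).continuous.comp_continuousOn (contOn_mul hC₁s hQ₂)
    simpa only [Function.comp_def, appCLM_apply] using this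
  have d1 : Integrable (fun θ => mulVecE (C₁ s θ * R₀ θ) (y θ)) (volume.restrict (Icc a b)) :=
    int_kernel_y_cont hy (contOn_mul hC₁s hR₀)
  have d2 : Integrable (fun θ => ∫ η in a..θ, mulVecE (C₁ s θ * R₁ θ η) (y η))
      (volume.restrict (Icc a b)) :=
    int_vec_marg (K := fun θ η => C₁ s θ * R₁ θ η) hab' hy hKA
      measurable_const measurable_id (fun _ _ => haI) (fun _ h => h)
  have d3 : Integrable (fun θ => ∫ η in θ..s, mulVecE (C₁ s θ * R₂ θ η) (y η))
      (volume.restrict (Icc a b)) :=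
    int_vec_marg (K := fun θ η => C₁ s θ * R₂ θ η) hab' hy hKB
      measurable_id measurable_const (fun _ h => h) (fun _ _ => hs)
  have d4 : Integrable (fun θ => ∫ η in s..b, mulVecE (C₁ s θ * R₂ θ η) (y η))
      (volume.restrict (Icc a b)) :=
    int_vec_marg (K := fun θ η => C₁ s θ * R₂ θ η) hab' hy hKB
      measurable_const measurable_const (fun _ _ => hs) (fun _ _ => hbI)
  have hδ : ∫ θ in a..s, mulVecE (C₁ s θ) (fourPIfun a b Q₂ R₀ R₁ R₂ x y θ)
      = mulVecE (∫ θ in a..s, C₁ s θ * Q₂ θ) x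
        + (∫ θ in a..s, mulVecE (C₁ s θ * R₀ θ) (y θ))
        + (∫ η in a..s, mulVecE (∫ θ in η..s, C₁ s θ * R₁ θ η) (y η))
        + ((∫ η in a..s, mulVecE (∫ θ in a..η, C₁ s θ * R₂ θ η) (y η))
          + ∫ η in s..b, mulVecE (∫ θ in a..s, C₁ s θ * R₂ θ η) (y η)) := by
    rw [intervalIntegral.integral_congr (g := fun θ =>
        mulVecE (C₁ s θ * Q₂ θ) x + mulVecE (C₁ s θ * R₀ θ) (y θ)
        + (∫ η in a..θ, mulVecE (C₁ s θ * R₁ θ η) (y η))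
        + ((∫ η in θ..s, mulVecE (C₁ s θ * R₂ θ η) (y η))
          + ∫ η in s..b, mulVecE (C₁ s θ * R₂ θ η) (y η)))
        (fun θ hθ => ?_)]
    · rw [intervalIntegral.integral_add
          ((((IIc d0 haI hs).add (II' d1 haI hs)).add (II' d2 haI hs)))
          ((II' d3 haI hs).add (II' d4 haI hs)),
        intervalIntegral.integral_add ((IIc d0 haI hs).add (II' d1 haI hs)) (II' d2 haI hs),
        intervalIntegral.integral_add (IIc d0 haI hs) (II' d1 haI hs),
        intervalIntegral.integral_add (II' d3 haI hs) (II' d4 haI hs)]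
      rw [intervalIntegral_mulVecE x (IIc (contOn_mul hC₁s hQ₂) haI hs)]
      -- swap D3
      rw [tri_swap1 (f := fun θ η => mulVecE (C₁ s θ * R₁ θ η) (y η))
          (int_kernel_y_prod (K := fun θ η => C₁ s θ * R₁ θ η) hy hKA) haI hs has']
      rw [tri_swap2 (f := fun θ η => mulVecE (C₁ s θ * R₂ θ η) (y η))
          (int_kernel_y_prod (K := fun θ η => C₁ s θ * R₂ θ η) hy hKB) haI hs has']
      rw [rect_swap (f := fun θ η => mulVecE (C₁ s θ * R₂ θ η) (y η))
          (int_kernel_y_prod (K := fun θ η => C₁ s θ * R₂ θ η) hy hKB) haI hs hs hbI has' hsb']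
      rw [intervalIntegral.integral_congr
          (f := fun η => ∫ θ in η..s, mulVecE (C₁ s θ * R₁ θ η) (y η))
          (g := fun η =>
          mulVecE (∫ θ in η..s, C₁ s θ * R₁ θ η) (y η)) (fun η hη => by
            rw [uIcc_of_le has'] at hη
            exact intervalIntegral_mulVecE (y η)
              (IIc (contSlice₂ (K := fun θ η => C₁ s θ * R₁ θ η) hKA
                ⟨hη.1, hη.2.trans hsb'⟩) ⟨hη.1, hη.2.trans hsb'⟩ hs)),
        intervalIntegral.integral_congr
          (f := fun η => ∫ θ in a..η, mulVecE (C₁ s θ * R₂ θ η) (y η))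
          (g := fun η =>
          mulVecE (∫ θ in a..η, C₁ s θ * R₂ θ η) (y η)) (fun η hη => by
            rw [uIcc_of_le has'] at hη
            exact intervalIntegral_mulVecE (y η)
              (IIc (contSlice₂ (K := fun θ η => C₁ s θ * R₂ θ η) hKB
                ⟨hη.1, hη.2.trans hsb'⟩) haI ⟨hη.1, hη.2.trans hsb'⟩)),
        intervalIntegral.integral_congr
          (f := fun η => ∫ θ in a..s, mulVecE (C₁ s θ * R₂ θ η) (y η))
          (g := fun η =>
          mulVecE (∫ θ in a..s, C₁ s θ * R₂ θ η) (y η)) (fun η hη => by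
            rw [uIcc_of_le hsb'] at hη
            exact intervalIntegral_mulVecE (y η)
              (IIc (contSlice₂ (K := fun θ η => C₁ s θ * R₂ θ η) hKB
                ⟨has'.trans hη.1, hη.2⟩) haI hs))]
    · rw [uIcc_of_le has'] at hθ
      have hθI : θ ∈ Icc a b := ⟨hθ.1, hθ.2.trans hsb'⟩
      rw [expand_w (C₁ s θ) Q₂ R₀ R₁ R₂ x hy hR₁ hR₂ hθI,
        ← intervalIntegral.integral_add_adjacent_intervals
          (II' (int_kernel_y_cont hy
            (contOn_mul continuousOn_const (contSlice₁ hR₂ hθI))) hθI hs)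
          (II' (int_kernel_y_cont hy
            (contOn_mul continuousOn_const (contSlice₁ hR₂ hθI))) hs hbI)]
  -- ε : the C₂ integral
  have e0 : ContinuousOn (fun θ => mulVecE (C₂ s θ * Q₂ θ) x) (Icc a b) := by
    have := (appCLM x).continuous.comp_continuousOn (contOn_mul hC₂s hQ₂)
    simpa only [Function.comp_def, appCLM_apply] using this
  have e1 : Integrable (fun θ => mulVecE (C₂ s θ * R₀ θ) (y θ)) (volume.restrict (Icc a b)) :=
    int_kernel_y_cont hy (contOn_mul hC₂s hR₀)
  have e2a : Integrable (fun θ => ∫ η in a..s, mulVecE (C₂ s θ * R₁ θ η) (y η))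
      (volume.restrict (Icc a b)) :=
    int_vec_marg (K := fun θ η => C₂ s θ * R₁ θ η) hab' hy hKC
      measurable_const measurable_const (fun _ _ => haI) (fun _ _ => hs)
  have e2b : Integrable (fun θ => ∫ η in s..θ, mulVecE (C₂ s θ * R₁ θ η) (y η))
      (volume.restrict (Icc a b)) :=
    int_vec_marg (K := fun θ η => C₂ s θ * R₁ θ η) hab' hy hKC
      measurable_const measurable_id (fun _ _ => hs) (fun _ h => h)
  have e3 : Integrable (fun θ => ∫ η in θ..b, mulVecE (C₂ s θ * R₂ θ η) (y η))
      (volume.restrict (Icc a b)) :=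
    int_vec_marg (K := fun θ η => C₂ s θ * R₂ θ η) hab' hy hKD
      measurable_id measurable_const (fun _ h => h) (fun _ _ => hbI)
  have hε : ∫ θ in s..b, mulVecE (C₂ s θ) (fourPIfun a b Q₂ R₀ R₁ R₂ x y θ)
      = mulVecE (∫ θ in s..b, C₂ s θ * Q₂ θ) x
        + (∫ θ in s..b, mulVecE (C₂ s θ * R₀ θ) (y θ))
        + ((∫ η in a..s, mulVecE (∫ θ in s..b, C₂ s θ * R₁ θ η) (y η))
          + ∫ η in s..b, mulVecE (∫ θ in η..b, C₂ s θ * R₁ θ η) (y η))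
        + ∫ η in s..b, mulVecE (∫ θ in s..η, C₂ s θ * R₂ θ η) (y η) := by
    rw [intervalIntegral.integral_congr (g := fun θ =>
        mulVecE (C₂ s θ * Q₂ θ) x + mulVecE (C₂ s θ * R₀ θ) (y θ)
        + ((∫ η in a..s, mulVecE (C₂ s θ * R₁ θ η) (y η))
          + ∫ η in s..θ, mulVecE (C₂ s θ * R₁ θ η) (y η))
        + ∫ η in θ..b, mulVecE (C₂ s θ * R₂ θ η) (y η))
        (fun θ hθ => ?_)]
    · rw [intervalIntegral.integral_add
          (((IIc e0 hs hbI).add (II' e1 hs hbI)).add ((II' e2a hs hbI).add (II' e2b hs hbI)))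
          (II' e3 hs hbI),
        intervalIntegral.integral_add ((IIc e0 hs hbI).add (II' e1 hs hbI))
          ((II' e2a hs hbI).add (II' e2b hs hbI)),
        intervalIntegral.integral_add (IIc e0 hs hbI) (II' e1 hs hbI),
        intervalIntegral.integral_add (II' e2a hs hbI) (II' e2b hs hbI)]
      rw [intervalIntegral_mulVecE x (IIc (contOn_mul hC₂s hQ₂) hs hbI)]
      rw [rect_swap (f := fun θ η => mulVecE (C₂ s θ * R₁ θ η) (y η))
          (int_kernel_y_prod (K := fun θ η => C₂ s θ * R₁ θ η) hy hKC) hs hbI haI hs hsb' has']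
      rw [tri_swap1 (f := fun θ η => mulVecE (C₂ s θ * R₁ θ η) (y η))
          (int_kernel_y_prod (K := fun θ η => C₂ s θ * R₁ θ η) hy hKC) hs hbI hsb']
      rw [tri_swap2 (f := fun θ η => mulVecE (C₂ s θ * R₂ θ η) (y η))
          (int_kernel_y_prod (K := fun θ η => C₂ s θ * R₂ θ η) hy hKD) hs hbI hsb']
      rw [intervalIntegral.integral_congr
          (f := fun η => ∫ θ in s..b, mulVecE (C₂ s θ * R₁ θ η) (y η))
          (g := fun η => mulVecE (∫ θ in s..b, C₂ s θ * R₁ θ η) (y η)) (fun η hη => by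
            rw [uIcc_of_le has'] at hη
            exact intervalIntegral_mulVecE (y η)
              (IIc (contSlice₂ (K := fun θ η => C₂ s θ * R₁ θ η) hKC
                ⟨hη.1, hη.2.trans hsb'⟩) hs hbI)),
        intervalIntegral.integral_congr
          (f := fun η => ∫ θ in η..b, mulVecE (C₂ s θ * R₁ θ η) (y η))
          (g := fun η => mulVecE (∫ θ in η..b, C₂ s θ * R₁ θ η) (y η)) (fun η hη => by
            rw [uIcc_of_le hsb'] at hη
            exact intervalIntegral_mulVecE (y η)
              (IIc (contSlice₂ (K := fun θ η => C₂ s θ * R₁ θ η) hKC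
                ⟨has'.trans hη.1, hη.2⟩) ⟨has'.trans hη.1, hη.2⟩ hbI)),
        intervalIntegral.integral_congr
          (f := fun η => ∫ θ in s..η, mulVecE (C₂ s θ * R₂ θ η) (y η))
          (g := fun η => mulVecE (∫ θ in s..η, C₂ s θ * R₂ θ η) (y η)) (fun η hη => by
            rw [uIcc_of_le hsb'] at hη
            exact intervalIntegral_mulVecE (y η)
              (IIc (contSlice₂ (K := fun θ η => C₂ s θ * R₂ θ η) hKD
                ⟨has'.trans hη.1, hη.2⟩) hs ⟨has'.trans hη.1, hη.2⟩))]
    · rw [uIcc_of_le hsb'] at hθ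
      have hθI : θ ∈ Icc a b := ⟨has'.trans hθ.1, hθ.2⟩
      rw [expand_w (C₂ s θ) Q₂ R₀ R₁ R₂ x hy hR₁ hR₂ hθI,
        ← intervalIntegral.integral_add_adjacent_intervals
          (II' (int_kernel_y_cont hy
            (contOn_mul continuousOn_const (contSlice₁ hR₁ hθI))) haI hs)
          (II' (int_kernel_y_cont hy
            (contOn_mul continuousOn_const (contSlice₁ hR₁ hθI))) hs hθI)]
  -- RHS expansion
  have r2 : Integrable (fun η => mulVecE (C₀ s * R₁ s η) (y η)) (volume.restrict (Icc a b)) :=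
    int_kernel_y_cont hy (contOn_mul continuousOn_const (contSlice₁ hR₁ hs))
  have r4 : Integrable (fun η => mulVecE (∫ θ in a..η, C₁ s θ * R₂ θ η) (y η))
      (volume.restrict (Icc a b)) :=
    int_marg_kernel_y (L := fun θ η => C₁ s θ * R₂ θ η) hab' hy hKB
      measurable_const measurable_id (fun _ _ => haI) (fun _ h => h)
  have r5 : Integrable (fun η => mulVecE (∫ θ in η..s, C₁ s θ * R₁ θ η) (y η))
      (volume.restrict (Icc a b)) :=
    int_marg_kernel_y (L := fun θ η => C₁ s θ * R₁ θ η) hab' hy hKA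
      measurable_id measurable_const (fun _ h => h) (fun _ _ => hs)
  have r6 : Integrable (fun η => mulVecE (∫ θ in s..b, C₂ s θ * R₁ θ η) (y η))
      (volume.restrict (Icc a b)) :=
    int_marg_kernel_y (L := fun θ η => C₂ s θ * R₁ θ η) hab' hy hKC
      measurable_const measurable_const (fun _ _ => hs) (fun _ _ => hbI)
  have t2 : Integrable (fun η => mulVecE (C₀ s * R₂ s η) (y η)) (volume.restrict (Icc a b)) :=
    int_kernel_y_cont hy (contOn_mul continuousOn_const (contSlice₁ hR₂ hs))
  have t4 : Integrable (fun η => mulVecE (∫ θ in a..s, C₁ s θ * R₂ θ η) (y η))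
      (volume.restrict (Icc a b)) :=
    int_marg_kernel_y (L := fun θ η => C₁ s θ * R₂ θ η) hab' hy hKB
      measurable_const measurable_const (fun _ _ => haI) (fun _ _ => hs)
  have t5 : Integrable (fun η => mulVecE (∫ θ in s..η, C₂ s θ * R₂ θ η) (y η))
      (volume.restrict (Icc a b)) :=
    int_marg_kernel_y (L := fun θ η => C₂ s θ * R₂ θ η) hab' hy hKD
      measurable_const measurable_id (fun _ _ => hs) (fun _ h => h)
  have t6 : Integrable (fun η => mulVecE (∫ θ in η..b, C₂ s θ * R₁ θ η) (y η))
      (volume.restrict (Icc a b)) :=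
    int_marg_kernel_y (L := fun θ η => C₂ s θ * R₁ θ η) hab' hy hKC
      measurable_id measurable_const (fun _ h => h) (fun _ _ => hbI)
  have hρ : fourPIfun a b
      (fun s => B₂ s * P + C₀ s * Q₂ s + (∫ η in a..s, C₁ s η * Q₂ η)
        + ∫ η in s..b, C₂ s η * Q₂ η)
      (fun s => C₀ s * R₀ s)
      (fun s η => B₂ s * Q₁ η + C₀ s * R₁ s η + C₁ s η * R₀ η
        + (∫ θ in a..η, C₁ s θ * R₂ θ η) + (∫ θ in η..s, C₁ s θ * R₁ θ η)
        + ∫ θ in s..b, C₂ s θ * R₁ θ η)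
      (fun s η => B₂ s * Q₁ η + C₀ s * R₂ s η + C₂ s η * R₀ η
        + (∫ θ in a..s, C₁ s θ * R₂ θ η) + (∫ θ in s..η, C₂ s θ * R₂ θ η)
        + ∫ θ in η..b, C₂ s θ * R₁ θ η)
      x y s
      = mulVecE (B₂ s * P) x + mulVecE (C₀ s * Q₂ s) x
        + mulVecE (∫ η in a..s, C₁ s η * Q₂ η) x + mulVecE (∫ η in s..b, C₂ s η * Q₂ η) x
        + (mulVecE (C₀ s * R₀ s) (y s)
          + ((((((∫ η in a..s, mulVecE (B₂ s * Q₁ η) (y η))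
            + ∫ η in a..s, mulVecE (C₀ s * R₁ s η) (y η))
            + ∫ η in a..s, mulVecE (C₁ s η * R₀ η) (y η))
            + ∫ η in a..s, mulVecE (∫ θ in a..η, C₁ s θ * R₂ θ η) (y η))
            + ∫ η in a..s, mulVecE (∫ θ in η..s, C₁ s θ * R₁ θ η) (y η))
            + ∫ η in a..s, mulVecE (∫ θ in s..b, C₂ s θ * R₁ θ η) (y η))
          + ((((((∫ η in s..b, mulVecE (B₂ s * Q₁ η) (y η))
            + ∫ η in s..b, mulVecE (C₀ s * R₂ s η) (y η))
            + ∫ η in s..b, mulVecE (C₂ s η * R₀ η) (y η))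
            + ∫ η in s..b, mulVecE (∫ θ in a..s, C₁ s θ * R₂ θ η) (y η))
            + ∫ η in s..b, mulVecE (∫ θ in s..η, C₂ s θ * R₂ θ η) (y η))
            + ∫ η in s..b, mulVecE (∫ θ in η..b, C₂ s θ * R₁ θ η) (y η))) := by
    simp only [fourPIfun, threePI]
    rw [add_mulVecE, add_mulVecE, add_mulVecE]
    congr 1
    congr 1
    · rw [intervalIntegral.integral_congr
        (f := fun η => mulVecE (B₂ s * Q₁ η + C₀ s * R₁ s η + C₁ s η * R₀ η
          + (∫ θ in a..η, C₁ s θ * R₂ θ η) + (∫ θ in η..s, C₁ s θ * R₁ θ η)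
          + ∫ θ in s..b, C₂ s θ * R₁ θ η) (y η))
        (g := fun η => mulVecE (B₂ s * Q₁ η) (y η) + mulVecE (C₀ s * R₁ s η) (y η)
          + mulVecE (C₁ s η * R₀ η) (y η) + mulVecE (∫ θ in a..η, C₁ s θ * R₂ θ η) (y η)
          + mulVecE (∫ θ in η..s, C₁ s θ * R₁ θ η) (y η)
          + mulVecE (∫ θ in s..b, C₂ s θ * R₁ θ η) (y η))
        (fun η _ => by simp only [add_mulVecE])]
      rw [intervalIntegral.integral_add (((((II' iBQ haI hs).add (II' r2 haI hs)).add
          (II' d1 haI hs)).add (II' r4 haI hs)).add (II' r5 haI hs)) (II' r6 haI hs),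
        intervalIntegral.integral_add ((((II' iBQ haI hs).add (II' r2 haI hs)).add
          (II' d1 haI hs)).add (II' r4 haI hs)) (II' r5 haI hs),
        intervalIntegral.integral_add (((II' iBQ haI hs).add (II' r2 haI hs)).add
          (II' d1 haI hs)) (II' r4 haI hs),
        intervalIntegral.integral_add ((II' iBQ haI hs).add (II' r2 haI hs)) (II' d1 haI hs),
        intervalIntegral.integral_add (II' iBQ haI hs) (II' r2 haI hs)]
    · rw [intervalIntegral.integral_congr
        (f := fun η => mulVecE (B₂ s * Q₁ η + C₀ s * R₂ s η + C₂ s η * R₀ η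
          + (∫ θ in a..s, C₁ s θ * R₂ θ η) + (∫ θ in s..η, C₂ s θ * R₂ θ η)
          + ∫ θ in η..b, C₂ s θ * R₁ θ η) (y η))
        (g := fun η => mulVecE (B₂ s * Q₁ η) (y η) + mulVecE (C₀ s * R₂ s η) (y η)
          + mulVecE (C₂ s η * R₀ η) (y η) + mulVecE (∫ θ in a..s, C₁ s θ * R₂ θ η) (y η)
          + mulVecE (∫ θ in s..η, C₂ s θ * R₂ θ η) (y η)
          + mulVecE (∫ θ in η..b, C₂ s θ * R₁ θ η) (y η))
        (fun η _ => by simp only [add_mulVecE])]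
      rw [intervalIntegral.integral_add (((((II' iBQ hs hbI).add (II' t2 hs hbI)).add
          (II' e1 hs hbI)).add (II' t4 hs hbI)).add (II' t5 hs hbI)) (II' t6 hs hbI),
        intervalIntegral.integral_add ((((II' iBQ hs hbI).add (II' t2 hs hbI)).add
          (II' e1 hs hbI)).add (II' t4 hs hbI)) (II' t5 hs hbI),
        intervalIntegral.integral_add (((II' iBQ hs hbI).add (II' t2 hs hbI)).add
          (II' e1 hs hbI)) (II' t4 hs hbI),
        intervalIntegral.integral_add ((II' iBQ hs hbI).add (II' t2 hs hbI)) (II' e1 hs hbI),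
        intervalIntegral.integral_add (II' iBQ hs hbI) (II' t2 hs hbI)]
  -- assemble
  rw [show fourPIfun a b B₂ C₀ C₁ C₂ (fourPIfin a b P Q₁ x y)
        (fourPIfun a b Q₂ R₀ R₁ R₂ x y) s
      = mulVecE (B₂ s) (fourPIfin a b P Q₁ x y)
        + (mulVecE (C₀ s) (fourPIfun a b Q₂ R₀ R₁ R₂ x y s)
          + (∫ θ in a..s, mulVecE (C₁ s θ) (fourPIfun a b Q₂ R₀ R₁ R₂ x y θ))
          + ∫ θ in s..b, mulVecE (C₂ s θ) (fourPIfun a b Q₂ R₀ R₁ R₂ x y θ)) from rfl]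
  rw [hβ, hγ, hδ, hε, hρ]
  abel

end mainsec

/-- Composition of the 4-PI operators `Π[A,B₁,B₂,C₀,C₁,C₂] : ℝ^k × L²(ℝ^n) → ℝ^p × L²(ℝ^q)`
and `Π[P,Q₁,Q₂,R₀,R₁,R₂] : ℝ^m × L²(ℝ^r) → ℝ^k × L²(ℝ^n)` equals the 4-PI operator
`Π[P̂,Q̂₁,Q̂₂,R̂₀,R̂₁,R̂₂]` with the stated composite parameters. -/
theorem fourPI_comp {p q k n m r : ℕ} {a b : ℝ} (hab : a < b)
    (A : Matrix (Fin p) (Fin k) ℝ)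
    (B₁ : ℝ → Matrix (Fin p) (Fin n) ℝ) (B₂ : ℝ → Matrix (Fin q) (Fin k) ℝ)
    (C₀ : ℝ → Matrix (Fin q) (Fin n) ℝ) (C₁ C₂ : ℝ → ℝ → Matrix (Fin q) (Fin n) ℝ)
    (P : Matrix (Fin k) (Fin m) ℝ)
    (Q₁ : ℝ → Matrix (Fin k) (Fin r) ℝ) (Q₂ : ℝ → Matrix (Fin n) (Fin m) ℝ)
    (R₀ : ℝ → Matrix (Fin n) (Fin r) ℝ) (R₁ R₂ : ℝ → ℝ → Matrix (Fin n) (Fin r) ℝ)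
    (hB₁ : ContinuousOn B₁ (Icc a b)) (hB₂ : ContinuousOn B₂ (Icc a b))
    (hC₀ : ContinuousOn C₀ (Icc a b))
    (hC₁ : ContinuousOn (fun z : ℝ × ℝ => C₁ z.1 z.2) (Icc a b ×ˢ Icc a b))
    (hC₂ : ContinuousOn (fun z : ℝ × ℝ => C₂ z.1 z.2) (Icc a b ×ˢ Icc a b))
    (hQ₁ : ContinuousOn Q₁ (Icc a b)) (hQ₂ : ContinuousOn Q₂ (Icc a b))
    (hR₀ : ContinuousOn R₀ (Icc a b))
    (hR₁ : ContinuousOn (fun z : ℝ × ℝ => R₁ z.1 z.2) (Icc a b ×ˢ Icc a b))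
    (hR₂ : ContinuousOn (fun z : ℝ × ℝ => R₂ z.1 z.2) (Icc a b ×ˢ Icc a b))
    (x : EuclideanSpace ℝ (Fin m)) (y : ℝ → EuclideanSpace ℝ (Fin r))
    (hy : MemLp y 2 (volume.restrict (Icc a b))) :
    fourPIfin a b A B₁ (fourPIfin a b P Q₁ x y) (fourPIfun a b Q₂ R₀ R₁ R₂ x y)
        = fourPIfin a b
            (A * P + ∫ s in a..b, B₁ s * Q₂ s)
            (fun s => A * Q₁ s + B₁ s * R₀ s + (∫ η in s..b, B₁ η * R₁ η s)
              + ∫ η in a..s, B₁ η * R₂ η s)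
            x y ∧
    ∀ᵐ s ∂(volume.restrict (Icc a b)),
      fourPIfun a b B₂ C₀ C₁ C₂ (fourPIfin a b P Q₁ x y) (fourPIfun a b Q₂ R₀ R₁ R₂ x y) s
        = fourPIfun a b
            (fun s => B₂ s * P + C₀ s * Q₂ s + (∫ η in a..s, C₁ s η * Q₂ η)
              + ∫ η in s..b, C₂ s η * Q₂ η)
            (fun s => C₀ s * R₀ s)
            (fun s η => B₂ s * Q₁ η + C₀ s * R₁ s η + C₁ s η * R₀ η
              + (∫ θ in a..η, C₁ s θ * R₂ θ η) + (∫ θ in η..s, C₁ s θ * R₁ θ η)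
              + ∫ θ in s..b, C₂ s θ * R₁ θ η)
            (fun s η => B₂ s * Q₁ η + C₀ s * R₂ s η + C₂ s η * R₀ η
              + (∫ θ in a..s, C₁ s θ * R₂ θ η) + (∫ θ in s..η, C₂ s θ * R₂ θ η)
              + ∫ θ in η..b, C₂ s θ * R₁ θ η)
            x y s := by
  constructor
  · exact part1 hab A B₁ P Q₁ Q₂ R₀ R₁ R₂ hB₁ hQ₁ hQ₂ hR₀ hR₁ hR₂ x y hy
  · refine (ae_restrict_iff' measurableSet_Icc).2 (ae_of_all _ fun s hs => ?_)
    exact part2 hab B₂ C₀ C₁ C₂ P Q₁ Q₂ R₀ R₁ R₂ hB₂ hC₀ hC₁ hC₂ hQ₁ hQ₂ hR₀ hR₁ hR₂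
      x y hy hs
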